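/- arXiv:1002.0994 — 2 statements merged into one kernel-verified Lean document; each statement's English description precedes it below -/
import Mathlib

section
/- Let $Q_0$ be a dyadic cube, $\mathcal{F}$ a finite family of pairwise disjoint dyadic subcubes of $Q_0$, and $\beta \in (0,1)$. Let $\overline{\mathcal{F}}$ be the family of maximal dyadic subcubes $R$ of $Q_0$ satisfying $|R \cap \bigcup_{Q\in\mathcal{F}} Q| > \beta |R|$, and let $\mathcal{F}_1$ be the family of dyadic parents of the cubes in $\overline{\mathcal{F}}$ (with the parent of $Q_0$ being $Q_0$ itself). Set $E = \bigcup_{Q\in\mathcal{F}} Q$ and $E_1 = \bigcup_{Q\in\mathcal{F}_1} Q$. Then either $|E_1| \ge \beta^{-1}|E|$, or $\beta^{-1}|E| > |Q_0|$ and $E_1 = Q_0$. -/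
open MeasureTheory Set

/-- A dyadic subcube of the unit cube `[0,1)^n`: a cube of rank `r` is determined by
an index `k : Fin n → ℕ` with `k i < 2^r`, and is the set
`∏ᵢ [kᵢ/2^r, (kᵢ+1)/2^r)`. -/
structure DyadicCube (n : ℕ) where
  rank : ℕ
  idx : Fin n → ℕ
  hidx : ∀ i, idx i < 2 ^ rank

/-- The subset of `ℝ^n` corresponding to a dyadic cube. -/
def DyadicCube.toSet {n : ℕ} (Q : DyadicCube n) : Set (Fin n → ℝ) :=
  {x | ∀ i, (Q.idx i : ℝ) / 2 ^ Q.rank ≤ x i ∧ x i < ((Q.idx i : ℝ) + 1) / 2 ^ Q.rank}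

/-- The dyadic parent of a cube: a cube of rank `r+1` has the unique cube of rank `r`
containing it as its parent; the parent of a cube of rank `0` (the unit cube itself)
is the cube itself. -/
def DyadicCube.parent {n : ℕ} (Q : DyadicCube n) : DyadicCube n :=
  match h : Q.rank with
  | 0 => Q
  | r + 1 =>
    ⟨r, fun i => Q.idx i / 2, fun i => by
      show Q.idx i / 2 < 2 ^ r
      have h2 := Q.hidx i
      rw [h, pow_succ] at h2
      omega⟩

/-- The unit cube `[0,1)^n`, the root of the dyadic family. -/
def unitCube (n : ℕ) : DyadicCube n :=
  ⟨0, fun _ => 0, fun _ => by norm_num⟩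


namespace DyadicCube

variable {n : ℕ}

lemma ext' {Q R : DyadicCube n} (h1 : Q.rank = R.rank) (h2 : ∀ i, Q.idx i = R.idx i) : Q = R := by
  cases Q with | mk r k hk =>
  cases R with | mk s l hl =>
  simp only at h1 h2
  subst h1
  have : k = l := funext h2
  subst this
  rfl

lemma toSet_eq_pi (Q : DyadicCube n) :
    Q.toSet = Set.pi Set.univ
      (fun i => Set.Ico ((Q.idx i : ℝ) / 2 ^ Q.rank) (((Q.idx i : ℝ) + 1) / 2 ^ Q.rank)) := by
  ext x
  simp [toSet, Set.mem_pi, Set.mem_Ico]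

lemma measurableSet_toSet (Q : DyadicCube n) : MeasurableSet Q.toSet := by
  rw [toSet_eq_pi]
  exact MeasurableSet.univ_pi fun i => measurableSet_Ico

lemma volume_toSet (Q : DyadicCube n) :
    volume Q.toSet = ENNReal.ofReal (((2:ℝ) ^ Q.rank)⁻¹) ^ n := by
  rw [toSet_eq_pi, volume_pi_pi]
  have h : ∀ i : Fin n,
      volume (Set.Ico ((Q.idx i : ℝ) / 2 ^ Q.rank) (((Q.idx i : ℝ) + 1) / 2 ^ Q.rank))
        = ENNReal.ofReal (((2:ℝ) ^ Q.rank)⁻¹) := by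
    intro i
    rw [Real.volume_Ico]
    congr 1
    field_simp
    ring
  simp only [h, Finset.prod_const, Finset.card_univ, Fintype.card_fin]

lemma volume_toSet_pos (Q : DyadicCube n) : 0 < volume Q.toSet := by
  rw [volume_toSet]
  exact ENNReal.pow_pos (ENNReal.ofReal_pos.mpr (by positivity)) n

lemma volume_toSet_ne_top (Q : DyadicCube n) : volume Q.toSet ≠ ⊤ := by
  rw [volume_toSet]
  exact ENNReal.pow_ne_top ENNReal.ofReal_ne_top

lemma corner_mem (Q : DyadicCube n) : (fun i => (Q.idx i : ℝ) / 2 ^ Q.rank) ∈ Q.toSet := by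
  intro i
  have h2r : (0:ℝ) < 2 ^ Q.rank := by positivity
  refine ⟨le_refl _, ?_⟩
  rw [div_lt_div_iff₀ h2r h2r]
  nlinarith

lemma subset_of_idx {Q R : DyadicCube n} (h : Q.rank ≤ R.rank)
    (h1 : ∀ i, Q.idx i * 2 ^ (R.rank - Q.rank) ≤ R.idx i)
    (h2 : ∀ i, R.idx i + 1 ≤ (Q.idx i + 1) * 2 ^ (R.rank - Q.rank)) :
    R.toSet ⊆ Q.toSet := by
  intro x hx i
  obtain ⟨hc, hd⟩ := hx i
  have hs : (2:ℝ) ^ R.rank = 2 ^ Q.rank * 2 ^ (R.rank - Q.rank) := by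
    rw [← pow_add]; congr 1; omega
  have h2r : (0:ℝ) < 2 ^ Q.rank := by positivity
  have h2s : (0:ℝ) < 2 ^ R.rank := by positivity
  have h2d : (0:ℝ) < 2 ^ (R.rank - Q.rank) := by positivity
  have k1 : ((Q.idx i : ℝ)) * 2 ^ (R.rank - Q.rank) ≤ R.idx i := by exact_mod_cast h1 i
  have k2 : ((R.idx i : ℝ)) + 1 ≤ ((Q.idx i : ℝ) + 1) * 2 ^ (R.rank - Q.rank) := by
    exact_mod_cast h2 i
  constructor
  · refine le_trans ?_ hc
    rw [div_le_div_iff₀ h2r h2s, hs]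
    nlinarith
  · refine lt_of_lt_of_le hd ?_
    rw [div_le_div_iff₀ h2s h2r, hs]
    nlinarith

lemma idx_of_mem {Q R : DyadicCube n} (h : Q.rank ≤ R.rank) {x : Fin n → ℝ}
    (hxQ : x ∈ Q.toSet) (hxR : x ∈ R.toSet) (i : Fin n) :
    Q.idx i * 2 ^ (R.rank - Q.rank) ≤ R.idx i ∧
      R.idx i + 1 ≤ (Q.idx i + 1) * 2 ^ (R.rank - Q.rank) := by
  obtain ⟨ha, hb⟩ := hxQ i
  obtain ⟨hc, hd⟩ := hxR i
  have hs : (2:ℝ) ^ R.rank = 2 ^ Q.rank * 2 ^ (R.rank - Q.rank) := by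
    rw [← pow_add]; congr 1; omega
  have h2r : (0:ℝ) < 2 ^ Q.rank := by positivity
  have h2s : (0:ℝ) < 2 ^ R.rank := by positivity
  constructor
  · by_contra hcon
    push_neg at hcon
    have hle : ((R.idx i : ℝ)) + 1 ≤ (Q.idx i : ℝ) * 2 ^ (R.rank - Q.rank) := by
      exact_mod_cast (by omega : R.idx i + 1 ≤ Q.idx i * 2 ^ (R.rank - Q.rank))
    have h1 : x i < (Q.idx i : ℝ) / 2 ^ Q.rank := by
      refine lt_of_lt_of_le hd ?_
      rw [div_le_div_iff₀ h2s h2r, hs]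
      nlinarith
    exact absurd ha (not_le.mpr h1)
  · by_contra hcon
    push_neg at hcon
    have hle : ((Q.idx i : ℝ) + 1) * 2 ^ (R.rank - Q.rank) ≤ (R.idx i : ℝ) := by
      exact_mod_cast (by omega : (Q.idx i + 1) * 2 ^ (R.rank - Q.rank) ≤ R.idx i)
    have h1 : x i < (R.idx i : ℝ) / 2 ^ R.rank := by
      refine lt_of_lt_of_le hb ?_
      rw [div_le_div_iff₀ h2r h2s, hs]
      nlinarith
    exact absurd hc (not_le.mpr h1)

lemma subset_or_disjoint {Q R : DyadicCube n} (h : Q.rank ≤ R.rank) :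
    R.toSet ⊆ Q.toSet ∨ Disjoint Q.toSet R.toSet := by
  by_cases hd : Disjoint Q.toSet R.toSet
  · exact Or.inr hd
  · left
    obtain ⟨x, hxQ, hxR⟩ := Set.not_disjoint_iff.mp hd
    exact subset_of_idx h (fun i => (idx_of_mem h hxQ hxR i).1)
      (fun i => (idx_of_mem h hxQ hxR i).2)

lemma subset_or_subset_or_disjoint (Q R : DyadicCube n) :
    Q.toSet ⊆ R.toSet ∨ R.toSet ⊆ Q.toSet ∨ Disjoint Q.toSet R.toSet := by
  rcases le_total Q.rank R.rank with h | h
  · rcases subset_or_disjoint h with h' | h'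
    · exact Or.inr (Or.inl h')
    · exact Or.inr (Or.inr h')
  · rcases subset_or_disjoint h with h' | h'
    · exact Or.inl h'
    · exact Or.inr (Or.inr h'.symm)

lemma rank_le_of_subset (hn : n ≠ 0) {Q R : DyadicCube n} (h : Q.toSet ⊆ R.toSet) :
    R.rank ≤ Q.rank := by
  have hv : volume Q.toSet ≤ volume R.toSet := measure_mono h
  rw [volume_toSet, volume_toSet, ← ENNReal.ofReal_pow (by positivity),
    ← ENNReal.ofReal_pow (by positivity),
    ENNReal.ofReal_le_ofReal_iff (by positivity)] at hv
  have h1 : ((2:ℝ) ^ Q.rank)⁻¹ ≤ ((2:ℝ) ^ R.rank)⁻¹ := by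
    by_contra hcon
    push_neg at hcon
    have : (((2:ℝ) ^ R.rank)⁻¹) ^ n < (((2:ℝ) ^ Q.rank)⁻¹) ^ n :=
      pow_lt_pow_left₀ hcon (by positivity) hn
    linarith
  have h2 : (2:ℝ) ^ R.rank ≤ (2:ℝ) ^ Q.rank := by
    rw [inv_le_inv₀ (by positivity) (by positivity)] at h1
    exact h1
  exact (pow_le_pow_iff_right₀ (by norm_num : (1:ℝ) < 2)).mp h2

lemma rank_eq_of_toSet_eq (hn : n ≠ 0) {Q R : DyadicCube n} (h : Q.toSet = R.toSet) :
    Q.rank = R.rank :=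
  le_antisymm (rank_le_of_subset hn h.superset) (rank_le_of_subset hn h.subset)

lemma toSet_eq_of_rank_eq {Q R : DyadicCube n} (h : Q.rank = R.rank) {x : Fin n → ℝ}
    (hxQ : x ∈ Q.toSet) (hxR : x ∈ R.toSet) : Q.toSet = R.toSet := by
  have h1 := idx_of_mem h.le hxQ hxR
  have heq : Q = R := by
    refine ext' h (fun i => ?_)
    have := h1 i
    rw [h, Nat.sub_self, pow_zero] at this
    omega
  rw [heq]

lemma subset_unit (Q : DyadicCube n) : Q.toSet ⊆ (unitCube n).toSet := by
  refine subset_of_idx (Q := unitCube n) (R := Q) (Nat.zero_le _) (fun i => ?_) (fun i => ?_)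
  · simp [unitCube]
  · have := Q.hidx i
    simp only [unitCube, Nat.sub_zero, one_mul]
    omega

lemma toSet_of_rank_zero {Q : DyadicCube n} (h : Q.rank = 0) : Q.toSet = (unitCube n).toSet := by
  have heq : Q = unitCube n := by
    refine ext' (by simp [unitCube, h]) (fun i => ?_)
    have := Q.hidx i
    rw [h, pow_zero] at this
    simp [unitCube]
    omega
  rw [heq]

lemma parent_eq_self {Q : DyadicCube n} (h : Q.rank = 0) : Q.parent = Q := by
  unfold parent
  split
  · rfl
  · rename_i r hr
    exact absurd h (by omega)

lemma parent_rank {Q : DyadicCube n} {r : ℕ} (h : Q.rank = r + 1) : Q.parent.rank = r := by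
  unfold parent
  split
  · rename_i hr
    exact absurd h (by omega)
  · rename_i r' hr'
    simp only
    omega

lemma parent_idx {Q : DyadicCube n} {r : ℕ} (h : Q.rank = r + 1) (i : Fin n) :
    Q.parent.idx i = Q.idx i / 2 := by
  unfold parent
  split
  · rename_i hr
    exact absurd h (by omega)
  · rfl

lemma subset_parent (Q : DyadicCube n) : Q.toSet ⊆ Q.parent.toSet := by
  rcases h : Q.rank with _ | r
  · rw [parent_eq_self h]
  · have e : Q.rank - Q.parent.rank = 1 := by rw [parent_rank h, h]; omega
    refine subset_of_idx (Q := Q.parent) (R := Q)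
      (by rw [parent_rank h, h]; omega) (fun i => ?_) (fun i => ?_)
    · rw [e, pow_one, parent_idx h]
      omega
    · rw [e, pow_one, parent_idx h]
      omega

end DyadicCube

/-- **Lemma of Nadirashvili on dyadic cubes.**
Let `Q₀` be (WLOG) the unit cube, `F` a finite family of pairwise disjoint dyadic
subcubes of `Q₀`, `β ∈ (0,1)`, `E = ⋃_{Q ∈ F} Q`. Let `F̄` be the family of maximal
dyadic cubes `R` with `|R ∩ E| > β |R|`, and `E₁` the union of the dyadic parents of
the cubes of `F̄`. Then either `|E₁| ≥ β⁻¹ |E|`, or `β⁻¹|E| > |Q₀|` and `E₁ = Q₀`. -/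
theorem dyadic_lemma (n : ℕ) (β : ℝ) (hβ : β ∈ Set.Ioo (0:ℝ) 1)
    (F : Finset (DyadicCube n))
    (hdisj : (F : Set (DyadicCube n)).Pairwise
      (fun Q Q' => Disjoint Q.toSet Q'.toSet))
    (E : Set (Fin n → ℝ)) (hE : E = ⋃ Q ∈ F, Q.toSet)
    (Fbar : Set (DyadicCube n))
    (hFbar : Fbar = {R : DyadicCube n |
      ENNReal.ofReal β * volume R.toSet < volume (R.toSet ∩ E) ∧
      ∀ R' : DyadicCube n, R.toSet ⊆ R'.toSet →
        ENNReal.ofReal β * volume R'.toSet < volume (R'.toSet ∩ E) →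
        R'.toSet = R.toSet})
    (E1 : Set (Fin n → ℝ)) (hE1 : E1 = ⋃ R ∈ Fbar, (DyadicCube.parent R).toSet) :
    ENNReal.ofReal β⁻¹ * volume E ≤ volume E1 ∨
      (volume (unitCube n).toSet < ENNReal.ofReal β⁻¹ * volume E ∧
        E1 = (unitCube n).toSet) := by
  obtain ⟨hβ0, hβ1⟩ := hβ
  -- basics
  have hinv1 : ENNReal.ofReal β⁻¹ * ENNReal.ofReal β = 1 := by
    rw [← ENNReal.ofReal_mul (by positivity), inv_mul_cancel₀ (ne_of_gt hβ0), ENNReal.ofReal_one]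
  have hinv0 : ENNReal.ofReal β⁻¹ ≠ 0 := by
    simp only [ne_eq, ENNReal.ofReal_eq_zero, not_le]
    positivity
  have hEmeas : MeasurableSet E := by
    rw [hE]
    exact F.measurableSet_biUnion (fun Q _ => Q.measurableSet_toSet)
  have hEsubQ0 : E ⊆ (unitCube n).toSet := by
    rw [hE]
    exact Set.iUnion₂_subset fun Q _ => Q.subset_unit
  have hFprop : ∀ Q ∈ F, ENNReal.ofReal β * volume Q.toSet < volume (Q.toSet ∩ E) := by
    intro Q hQ
    have hsub : Q.toSet ⊆ E := by
      rw [hE]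
      exact Set.subset_biUnion_of_mem hQ
    rw [Set.inter_eq_self_of_subset_left hsub]
    calc ENNReal.ofReal β * volume Q.toSet < 1 * volume Q.toSet := by
          rw [ENNReal.mul_lt_mul_iff_left (ne_of_gt Q.volume_toSet_pos) Q.volume_toSet_ne_top]
          exact ENNReal.ofReal_lt_one.mpr hβ1
      _ = volume Q.toSet := one_mul _
  by_cases hQ0p : ENNReal.ofReal β * volume (unitCube n).toSet < volume ((unitCube n).toSet ∩ E)
  · -- the root cube itself has the property: right disjunct
    right
    have hQ0mem : unitCube n ∈ Fbar := by
      rw [hFbar]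
      exact ⟨hQ0p, fun R' hsub _ => le_antisymm R'.subset_unit hsub⟩
    have hIE : volume ((unitCube n).toSet ∩ E) = volume E := by
      rw [Set.inter_eq_self_of_subset_right hEsubQ0]
    constructor
    · rw [hIE] at hQ0p
      calc volume (unitCube n).toSet
          = ENNReal.ofReal β⁻¹ * (ENNReal.ofReal β * volume (unitCube n).toSet) := by
            rw [← mul_assoc, hinv1, one_mul]
        _ < ENNReal.ofReal β⁻¹ * volume E := by
            rw [ENNReal.mul_lt_mul_iff_right hinv0 ENNReal.ofReal_ne_top]
            exact hQ0p
    · refine subset_antisymm ?_ ?_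
      · rw [hE1]
        exact Set.iUnion₂_subset fun R _ => (R.parent).subset_unit
      · rw [hE1]
        have hpar : (unitCube n).parent = unitCube n := DyadicCube.parent_eq_self rfl
        calc (unitCube n).toSet = ((unitCube n).parent).toSet := by rw [hpar]
          _ ⊆ ⋃ R ∈ Fbar, (DyadicCube.parent R).toSet :=
              Set.subset_biUnion_of_mem (u := fun R => (DyadicCube.parent R).toSet) hQ0mem
  -- root fails the property
  rcases Finset.eq_empty_or_nonempty F with hFe | hFne
  · -- empty family: trivial
    left
    have hE0 : E = ∅ := by rw [hE, hFe]; simp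
    have hFbar0 : Fbar = ∅ := by
      rw [Set.eq_empty_iff_forall_notMem]
      intro R hR
      rw [hFbar] at hR
      have := hR.1
      simp [hE0] at this
    rw [hE1, hFbar0, hE0]
    simp
  have hn : n ≠ 0 := by
    rintro rfl
    obtain ⟨Q, hQ⟩ := hFne
    apply hQ0p
    have hset : Q.toSet = (unitCube 0).toSet := by
      have h1 : Q.toSet = Set.univ := Set.eq_univ_of_forall (fun x i => i.elim0)
      have h2 : (unitCube 0).toSet = Set.univ := Set.eq_univ_of_forall (fun x i => i.elim0)
      rw [h1, h2]
    rw [← hset]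
    exact hFprop Q hQ
  -- existence of maximal cubes above any cube with the property
  have hmax : ∀ (m : ℕ) (Q : DyadicCube n), Q.rank ≤ m →
      ENNReal.ofReal β * volume Q.toSet < volume (Q.toSet ∩ E) →
      ∃ R ∈ Fbar, Q.toSet ⊆ R.toSet := by
    intro m
    induction m with
    | zero =>
      intro Q hrank hp
      refine ⟨Q, ?_, subset_rfl⟩
      rw [hFbar]
      refine ⟨hp, fun R' hsub _ => ?_⟩
      have h0 : Q.toSet = (unitCube n).toSet := DyadicCube.toSet_of_rank_zero (Nat.le_zero.mp hrank)
      exact le_antisymm (h0 ▸ R'.subset_unit) hsub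
    | succ m ih =>
      intro Q hrank hp
      by_cases hQmax : ∀ R' : DyadicCube n, Q.toSet ⊆ R'.toSet →
          ENNReal.ofReal β * volume R'.toSet < volume (R'.toSet ∩ E) → R'.toSet = Q.toSet
      · refine ⟨Q, ?_, subset_rfl⟩
        rw [hFbar]
        exact ⟨hp, hQmax⟩
      · push_neg at hQmax
        obtain ⟨R', hsub, hp', hne⟩ := hQmax
        have h1 : R'.rank ≤ Q.rank := DyadicCube.rank_le_of_subset hn hsub
        have h2 : R'.rank ≠ Q.rank := by
          intro he
          exact hne (DyadicCube.toSet_eq_of_rank_eq he (hsub Q.corner_mem) Q.corner_mem)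
        obtain ⟨R, hR, hsub'⟩ := ih R' (by omega) hp'
        exact ⟨R, hR, hsub.trans hsub'⟩
  -- the parent of any cube of Fbar fails the property
  have hparent : ∀ R ∈ Fbar,
      volume (R.parent.toSet ∩ E) ≤ ENNReal.ofReal β * volume R.parent.toSet := by
    intro R hR
    rw [hFbar] at hR
    by_contra hlt
    push_neg at hlt
    have hrk : R.rank ≠ 0 := by
      intro h0
      exact hQ0p ((DyadicCube.toSet_of_rank_zero h0) ▸ hR.1)
    obtain ⟨r, hr⟩ : ∃ r, R.rank = r + 1 := ⟨R.rank - 1, by omega⟩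
    have heq := hR.2 R.parent R.subset_parent hlt
    have := DyadicCube.rank_eq_of_toSet_eq hn heq
    rw [DyadicCube.parent_rank hr, hr] at this
    omega
  -- Fbar is finite
  have hFbarFin : Fbar.Finite := by
    have hN : ∀ R ∈ Fbar, R.rank ≤ F.sup (fun Q => Q.rank) := by
      intro R hR
      have hR' := hR
      rw [hFbar] at hR'
      have h1 : volume (R.toSet ∩ E) ≠ 0 := by
        intro h
        have hp1 := hR'.1
        rw [h] at hp1
        exact absurd hp1 (by simp)
      have h2 : ∃ Q ∈ F, ¬Disjoint R.toSet Q.toSet := by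
        by_contra hc
        push_neg at hc
        apply h1
        have hemp : R.toSet ∩ E = ∅ := by
          rw [hE, Set.eq_empty_iff_forall_notMem]
          rintro x ⟨hxR, hxE⟩
          simp only [Set.mem_iUnion] at hxE
          obtain ⟨Q, hQ, hxQ⟩ := hxE
          exact Set.disjoint_left.mp (hc Q hQ) hxR hxQ
        rw [hemp]
        exact measure_empty
      obtain ⟨Q, hQF, hnd⟩ := h2
      rcases DyadicCube.subset_or_subset_or_disjoint R Q with hs | hs | hd
      · have heq := hR'.2 Q hs (hFprop Q hQF)
        have := DyadicCube.rank_eq_of_toSet_eq hn heq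
        rw [← this]
        exact Finset.le_sup hQF
      · exact le_trans (DyadicCube.rank_le_of_subset hn hs) (Finset.le_sup hQF)
      · exact absurd hd hnd
    set N := F.sup (fun Q => Q.rank) with hNdef
    have hsubfin : Fbar ⊆ {R : DyadicCube n | R.rank ≤ N} := fun R hR => hN R hR
    refine Set.Finite.subset ?_ hsubfin
    have hinj : Function.Injective (fun R : DyadicCube n => (R.rank, R.idx)) := by
      intro Q R h
      simp only [Prod.mk.injEq] at h
      exact DyadicCube.ext' h.1 (fun i => congrFun h.2 i)
    apply Set.Finite.of_finite_image ?_ (hinj.injOn)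
    refine Set.Finite.subset ((Set.finite_Iic N).prod (Set.Finite.pi
      (fun i : Fin n => Set.finite_Iio (2 ^ N)))) ?_
    rintro p ⟨R, hR, rfl⟩
    refine ⟨hR, fun i _ => ?_⟩
    have h1 := R.hidx i
    have h2 : (2:ℕ) ^ R.rank ≤ 2 ^ N := Nat.pow_le_pow_right (by norm_num) hR
    simp only [Set.mem_Iio]
    omega
  -- main counting argument
  left
  set S : Set (Set (Fin n → ℝ)) := (fun R : DyadicCube n => R.parent.toSet) '' Fbar with hS
  have hSfin : S.Finite := hFbarFin.image _
  set M : Set (Set (Fin n → ℝ)) := {A ∈ S | ∀ B ∈ S, A ⊆ B → B = A} with hM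
  have hMsubS : M ⊆ S := fun A hA => hA.1
  have hMfin : M.Finite := hSfin.subset hMsubS
  have hcube : ∀ A ∈ S, ∃ R ∈ Fbar, R.parent.toSet = A := by
    rintro A ⟨R, hR, rfl⟩
    exact ⟨R, hR, rfl⟩
  have hmaxS : ∀ A ∈ S, ∃ B ∈ M, A ⊆ B := by
    intro A hA
    obtain ⟨B, hB, hmaxB⟩ := Set.Finite.exists_maximalFor id {B ∈ S | A ⊆ B}
      (hSfin.subset (Set.sep_subset _ _)) ⟨A, hA, subset_rfl⟩
    refine ⟨B, ⟨hB.1, fun C hC hBC => ?_⟩, hB.2⟩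
    exact subset_antisymm (hmaxB ⟨hC, hB.2.trans hBC⟩ hBC) hBC
  have hAmeas : ∀ A ∈ S, MeasurableSet A := by
    intro A hA
    obtain ⟨R, _, rfl⟩ := hcube A hA
    exact R.parent.measurableSet_toSet
  have hAbound : ∀ A ∈ M, volume (E ∩ A) ≤ ENNReal.ofReal β * volume A := by
    intro A hA
    obtain ⟨R, hR, rfl⟩ := hcube A (hMsubS hA)
    rw [Set.inter_comm]
    exact hparent R hR
  have hMdisj : M.PairwiseDisjoint id := by
    intro A hA B hB hne
    obtain ⟨R, hRF, hRe⟩ := hcube A (hMsubS hA)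
    obtain ⟨R', hRF', hRe'⟩ := hcube B (hMsubS hB)
    rcases DyadicCube.subset_or_subset_or_disjoint R.parent R'.parent with hs | hs | hd
    · rw [hRe, hRe'] at hs
      exact absurd (hA.2 B (hMsubS hB) hs) hne.symm
    · rw [hRe, hRe'] at hs
      exact absurd (hB.2 A (hMsubS hA) hs) hne
    · rw [hRe, hRe'] at hd
      exact hd
  have hE1M : E1 = ⋃ A ∈ M, A := by
    rw [hE1]
    apply subset_antisymm
    · refine Set.iUnion₂_subset fun R hR => ?_
      obtain ⟨B, hBM, hsub⟩ := hmaxS R.parent.toSet ⟨R, hR, rfl⟩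
      exact hsub.trans (Set.subset_biUnion_of_mem (u := fun A => A) hBM)
    · refine Set.iUnion₂_subset fun A hA => ?_
      obtain ⟨R, hR, rfl⟩ := hcube A (hMsubS hA)
      exact Set.subset_biUnion_of_mem (u := fun R : DyadicCube n => R.parent.toSet) hR
  have hEsub1 : E ⊆ E1 := by
    rw [hE]
    refine Set.iUnion₂_subset fun Q hQ => ?_
    obtain ⟨R, hR, hsub⟩ := hmax Q.rank Q le_rfl (hFprop Q hQ)
    rw [hE1]
    exact (hsub.trans R.subset_parent).trans (Set.subset_biUnion_of_mem (u := fun R : DyadicCube n => R.parent.toSet) hR)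
  set T : Finset (Set (Fin n → ℝ)) := hMfin.toFinset with hT
  have hTcoe : (↑T : Set (Set (Fin n → ℝ))) = M := hMfin.coe_toFinset
  have hTmem : ∀ {A}, A ∈ T → A ∈ M := fun h => hMfin.mem_toFinset.mp h
  have hTdisj : (↑T : Set (Set (Fin n → ℝ))).PairwiseDisjoint id := by
    rw [hTcoe]; exact hMdisj
  have hE1T : E1 = ⋃ A ∈ T, A := by
    rw [hE1M, ← hTcoe]
    simp
  have hE1vol : volume E1 = ∑ A ∈ T, volume A := by
    rw [hE1T]
    exact measure_biUnion_finset hTdisj (fun A hA => hAmeas A (hMsubS (hTmem hA)))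
  have hET : E = ⋃ A ∈ T, (E ∩ A) := by
    apply subset_antisymm
    · intro x hx
      have := hEsub1 hx
      rw [hE1T] at this
      simp only [Set.mem_iUnion] at this ⊢
      obtain ⟨A, hA, hxA⟩ := this
      exact ⟨A, hA, hx, hxA⟩
    · exact Set.iUnion₂_subset fun A _ => Set.inter_subset_left
  have hEvol : volume E = ∑ A ∈ T, volume (E ∩ A) := by
    conv_lhs => rw [hET]
    refine measure_biUnion_finset ?_ (fun A hA => hEmeas.inter (hAmeas A (hMsubS (hTmem hA))))
    intro A hA B hB hne
    exact ((hTdisj hA hB hne).mono Set.inter_subset_right Set.inter_subset_right : Disjoint (E ∩ A) (E ∩ B))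
  have hkey : volume E ≤ ENNReal.ofReal β * volume E1 := by
    rw [hEvol, hE1vol, Finset.mul_sum]
    refine Finset.sum_le_sum fun A hA => hAbound A (hTmem hA)
  calc ENNReal.ofReal β⁻¹ * volume E ≤ ENNReal.ofReal β⁻¹ * (ENNReal.ofReal β * volume E1) :=
        mul_le_mul_right hkey _
    _ = volume E1 := by rw [← mul_assoc, hinv1, one_mul]
end

section
/- Let $F_1 \subset \mathbb{R}^n$ be a nonempty closed set, $x_0 \in F_1$, and suppose $\int_{|y| \le 1} \frac{\mathrm{dist}(x_0 + y, F_1)}{|y|^{n+1}}\, dy < \infty$. Define $h(r) = \max_{|y| = r} \mathrm{dist}(x_0 + y, F_1)$ for $r \in (0, r_1)$, for some $r_1 \in (0,1)$. Then $\int_0^{r_1} \frac{h(r)^n}{r^{n+1}}\, dr < \infty$. -/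
open MeasureTheory Set Metric

set_option maxHeartbeats 1000000 in
/-- **From the Marcinkiewicz integral to a radial integral bound.**
Let `F₁ ⊂ ℝⁿ` be a nonempty closed set, `x₀ ∈ F₁`, and suppose the Marcinkiewicz
integral `∫_{|y| ≤ 1} dist(x₀+y, F₁)/|y|^{n+1} dy` is finite. With
`h(r) = max_{|y| = r} dist(x₀+y, F₁)`, one has `∫₀^{r₁} h(r)ⁿ/r^{n+1} dr < ∞`. -/
theorem marcinkiewicz_radial (n : ℕ) (hn : 1 ≤ n)
    (F₁ : Set (EuclideanSpace ℝ (Fin n))) (hcl : IsClosed F₁) (hne : F₁.Nonempty)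
    (x₀ : EuclideanSpace ℝ (Fin n)) (hx₀ : x₀ ∈ F₁)
    (hMar : IntegrableOn
      (fun y => Metric.infDist (x₀ + y) F₁ / ‖y‖ ^ (n + 1))
      (Metric.closedBall (0 : EuclideanSpace ℝ (Fin n)) 1))
    (r₁ : ℝ) (hr₁ : r₁ ∈ Set.Ioo (0:ℝ) 1)
    (h : ℝ → ℝ)
    (hh : ∀ r : ℝ, h r = sSup ((fun y => Metric.infDist (x₀ + y) F₁) ''
      Metric.sphere (0 : EuclideanSpace ℝ (Fin n)) r)) :
    IntegrableOn (fun r : ℝ => h r ^ n / r ^ (n + 1)) (Set.Ioo (0:ℝ) r₁) := by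
  haveI : Nonempty (Fin n) := ⟨⟨0, hn⟩⟩
  haveI : Nontrivial (EuclideanSpace ℝ (Fin n)) :=
    Module.nontrivial_of_finrank_pos (R := ℝ)
      (by rw [finrank_euclideanSpace_fin]; omega)
  set d : EuclideanSpace ℝ (Fin n) → ℝ := fun z => Metric.infDist (x₀ + z) F₁ with hd_def
  have hdcont : Continuous d := by
    exact (continuous_infDist_pt F₁).comp (continuous_const.add continuous_id)
  have hd0 : ∀ z, 0 ≤ d z := fun z => Metric.infDist_nonneg
  have hdle : ∀ z, d z ≤ ‖z‖ := by
    intro z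
    have := Metric.infDist_le_dist_of_mem (x := x₀ + z) hx₀
    simpa [dist_eq_norm, add_sub_cancel_left] using this
  have hdtri : ∀ z w : EuclideanSpace ℝ (Fin n), d z ≤ d w + ‖z - w‖ := by
    intro z w
    have := Metric.infDist_le_infDist_add_dist (x := x₀ + z) (y := x₀ + w) (s := F₁)
    simpa [dist_eq_norm, add_sub_add_left_eq_sub] using this
  -- maximizer on the sphere
  have hmaxex : ∀ r : ℝ, 0 < r → ∃ y : EuclideanSpace ℝ (Fin n), ‖y‖ = r ∧ d y = h r ∧
      ∀ z : EuclideanSpace ℝ (Fin n), ‖z‖ = r → d z ≤ h r := by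
    intro r hr
    have hsne : (Metric.sphere (0:EuclideanSpace ℝ (Fin n)) r).Nonempty := NormedSpace.sphere_nonempty.mpr hr.le
    obtain ⟨y, hy, hymax⟩ := (isCompact_sphere (0:EuclideanSpace ℝ (Fin n)) r).exists_isMaxOn hsne
      hdcont.continuousOn
    have hyn : ‖y‖ = r := by simpa using mem_sphere_zero_iff_norm.mp hy
    have hgreat : IsGreatest (d '' Metric.sphere (0:EuclideanSpace ℝ (Fin n)) r) (d y) :=
      ⟨⟨y, hy, rfl⟩, by rintro v ⟨z, hz, rfl⟩; exact hymax hz⟩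
    have : h r = d y := by rw [hh r]; exact hgreat.csSup_eq
    exact ⟨y, hyn, this.symm, fun z hz => this ▸ hgreat.2 ⟨z, mem_sphere_zero_iff_norm.mpr hz, rfl⟩⟩
  have hh0 : ∀ r : ℝ, 0 < r → 0 ≤ h r := by
    intro r hr; obtain ⟨y, -, hy, -⟩ := hmaxex r hr; exact hy ▸ hd0 y
  have hhr : ∀ r : ℝ, 0 < r → h r ≤ r := by
    intro r hr; obtain ⟨y, hyn, hy, -⟩ := hmaxex r hr
    calc h r = d y := hy.symm
    _ ≤ ‖y‖ := hdle y
    _ = r := hyn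
  -- Lipschitz property of h
  have hlip : ∀ r s : ℝ, 0 < r → 0 < s → h r ≤ h s + |r - s| := by
    intro r s hr hs
    obtain ⟨y, hyn, hy, -⟩ := hmaxex r hr
    obtain ⟨-, -, -, hsmax⟩ := hmaxex s hs
    set y' : EuclideanSpace ℝ (Fin n) := (s / r) • y with hy'def
    have hy'n : ‖y'‖ = s := by
      rw [hy'def, norm_smul, hyn, Real.norm_eq_abs, abs_of_pos (div_pos hs hr)]
      field_simp
    have hdist : ‖y - y'‖ = |r - s| := by
      have : y - y' = (1 - s / r) • y := by rw [hy'def, sub_smul, one_smul]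
      rw [this, norm_smul, hyn, Real.norm_eq_abs]
      rw [show (1 : ℝ) - s / r = (r - s) / r by field_simp]
      rw [abs_div, abs_of_pos hr]
      field_simp
    calc h r = d y := hy.symm
    _ ≤ d y' + ‖y - y'‖ := hdtri y y'
    _ ≤ h s + |r - s| := by
        have := hsmax y' hy'n
        rw [hdist]; linarith
  have hhcont : ContinuousOn h (Set.Ioi (0:ℝ)) := by
    refine (LipschitzOnWith.continuousOn (K := 1) ?_)
    rw [lipschitzOnWith_iff_dist_le_mul]
    intro r hr s hs
    rw [Real.dist_eq, Real.dist_eq, abs_sub_le_iff]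
    constructor
    · have := hlip r s hr hs; rw [abs_sub_comm] at this ⊢; simp only [NNReal.coe_one, one_mul]
      have h2 := hlip r s hr hs
      linarith [abs_sub_comm r s ▸ h2]
    · have := hlip s r hs hr
      simp only [NNReal.coe_one, one_mul]
      rw [abs_sub_comm] at this
      linarith

  -- abbreviations
  set g : ℝ → ENNReal := fun r => ENNReal.ofReal (h r ^ n / r ^ (n + 1)) with hgdef
  set F : EuclideanSpace ℝ (Fin n) → ENNReal :=
    fun z => ENNReal.ofReal (d z / ‖z‖ ^ (n + 1)) with hFdef
  set M : ENNReal := ∫⁻ z in Metric.closedBall (0 : EuclideanSpace ℝ (Fin n)) 1, F z with hMdef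
  have hMfin : M < ⊤ := by
    refine lt_of_le_of_lt (lintegral_mono fun z => ?_) hMar.2
    exact Real.ofReal_le_enorm _
  -- constants
  set c₀ : ℝ := min (1/8) ((1 - r₁)/2) with hc₀def
  have hc₀pos : 0 < c₀ := lt_min (by norm_num) (by linarith [hr₁.2])
  have hc₀8 : c₀ ≤ 1/8 := min_le_left _ _
  have hc₀r : c₀ ≤ (1 - r₁)/2 := min_le_right _ _
  set κ : ENNReal := ENNReal.ofReal (7/8 * (8/9)^(n+1) * c₀^n) *
    volume (Metric.ball (0 : EuclideanSpace ℝ (Fin n)) 1) with hκdef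
  -- Key lower bound: a ball on which the integrand is large
  have hKL : ∀ b : ℝ, 0 < b → b < r₁ → 0 < h b →
      ∃ B : Set (EuclideanSpace ℝ (Fin n)), MeasurableSet B ∧
        B ⊆ Metric.closedBall (0 : EuclideanSpace ℝ (Fin n)) 1 ∧
        (∀ z ∈ B, |‖z‖ - b| ≤ h b / 8) ∧
        κ * ENNReal.ofReal (h b ^ (n+1) / b ^ (n+1)) ≤ ∫⁻ z in B, F z := by
    intro b hb hbr hhb
    obtain ⟨y, hyn, hyd, -⟩ := hmaxex b hb
    set ρ : ℝ := c₀ * h b with hρdef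
    have hρpos : 0 < ρ := mul_pos hc₀pos hhb
    have hhb1 : h b ≤ 1 := le_trans (hhr b hb) (le_of_lt (lt_trans hbr hr₁.2))
    have hρ8 : ρ ≤ h b / 8 := by
      calc ρ ≤ (1/8) * h b := mul_le_mul_of_nonneg_right hc₀8 hhb.le
      _ = h b / 8 := by ring
    have hρb : ρ ≤ b / 8 := le_trans hρ8 (by linarith [hhr b hb])
    have hann : ∀ z ∈ Metric.closedBall y ρ, |‖z‖ - b| ≤ h b / 8 := by
      intro z hz
      rw [Metric.mem_closedBall, dist_eq_norm] at hz
      calc |‖z‖ - b| = |‖z‖ - ‖y‖| := by rw [hyn]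
      _ ≤ ‖z - y‖ := abs_norm_sub_norm_le z y
      _ ≤ ρ := hz
      _ ≤ h b / 8 := hρ8
    refine ⟨Metric.closedBall y ρ, measurableSet_closedBall, ?_, hann, ?_⟩
    · intro z hz
      rw [Metric.mem_closedBall, dist_eq_norm] at hz ⊢
      have h1 : ‖z‖ ≤ ‖y‖ + ‖z - y‖ := norm_le_insert' z y
      have h2 : ρ ≤ (1 - r₁)/2 := by
        calc ρ ≤ ((1 - r₁)/2) * h b := mul_le_mul_of_nonneg_right hc₀r hhb.le
        _ ≤ ((1 - r₁)/2) * 1 := by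
            apply mul_le_mul_of_nonneg_left hhb1; linarith [hr₁.2]
        _ = (1 - r₁)/2 := mul_one _
      simp only [sub_zero]
      rw [hyn] at h1
      linarith [hz, hr₁.2]
    · -- pointwise bound and volume computation
      have hpt : ∀ z ∈ Metric.closedBall y ρ,
          ENNReal.ofReal (7/8 * h b / ((9/8) * b)^(n+1)) ≤ F z := by
        intro z hz
        have hann' := hann z hz
        rw [Metric.mem_closedBall, dist_eq_norm] at hz
        have hnyz : ‖y - z‖ ≤ ρ := by rw [norm_sub_rev]; exact hz
        have hdz : 7/8 * h b ≤ d z := by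
          have htri := hdtri y z
          rw [hyd] at htri
          linarith [hρ8]
        have habs := abs_le.mp hann'
        have hz1 : ‖z‖ ≤ (9/8) * b := by linarith [hhr b hb]
        have hz0 : 0 < ‖z‖ := by linarith [hhr b hb]
        apply ENNReal.ofReal_le_ofReal
        exact div_le_div₀ (hd0 z) hdz (pow_pos hz0 _)
          (pow_le_pow_left₀ hz0.le hz1 _)
      have hre : (7/8 * (8/9)^(n+1) * c₀^n) * (h b ^ (n+1) / b ^ (n+1))
          = (7/8 * h b / ((9/8) * b)^(n+1)) * ρ^n := by
        rw [hρdef, mul_pow, mul_pow, show (8/9 : ℝ) = (9/8)⁻¹ by norm_num, inv_pow]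
        have hb9 : ((9:ℝ)/8)^(n+1) ≠ 0 := by positivity
        field_simp
        ring
      calc κ * ENNReal.ofReal (h b ^ (n+1) / b ^ (n+1))
          = ENNReal.ofReal ((7/8 * (8/9)^(n+1) * c₀^n) * (h b ^ (n+1) / b ^ (n+1))) *
            volume (Metric.ball (0 : EuclideanSpace ℝ (Fin n)) 1) := by
            rw [hκdef, mul_right_comm, ← ENNReal.ofReal_mul
              (show (0:ℝ) ≤ 7/8 * (8/9)^(n+1) * c₀^n by positivity)]
      _ = ENNReal.ofReal (7/8 * h b / ((9/8) * b)^(n+1)) *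
            (ENNReal.ofReal (ρ^n) * volume (Metric.ball (0 : EuclideanSpace ℝ (Fin n)) 1)) := by
            rw [hre, ENNReal.ofReal_mul
              (show (0:ℝ) ≤ 7/8 * h b / ((9/8) * b)^(n+1) by positivity), mul_assoc]
      _ = ENNReal.ofReal (7/8 * h b / ((9/8) * b)^(n+1)) *
            volume (Metric.closedBall y ρ) := by
            rw [Measure.addHaar_closedBall volume y hρpos.le, finrank_euclideanSpace_fin]
      _ = ∫⁻ _ in Metric.closedBall y ρ,
            ENNReal.ofReal (7/8 * h b / ((9/8) * b)^(n+1)) := (setLIntegral_const _ _).symm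
      _ ≤ ∫⁻ z in Metric.closedBall y ρ, F z := setLIntegral_mono' measurableSet_closedBall hpt
  -- Covering upper bound for the radial integrand
  set Cn : ENNReal := ENNReal.ofReal ((3/2)^n * 2^(n+1)) with hCndef
  have hCL : ∀ b : ℝ, 0 < b → 0 < h b →
      ∫⁻ r in Metric.closedBall b (4 * (h b / 8)), g r
        ≤ Cn * ENNReal.ofReal (h b ^ (n+1) / b ^ (n+1)) := by
    intro b hb hhb
    have key : ∀ r ∈ Metric.closedBall b (4 * (h b / 8)),
        g r ≤ ENNReal.ofReal (((3/2) * h b)^n / (b/2)^(n+1)) := by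
      intro r hr
      rw [Metric.mem_closedBall, Real.dist_eq] at hr
      have hrb : |r - b| ≤ h b / 2 := by linarith
      have habs := abs_le.mp hrb
      have hb2 : b/2 ≤ r := by linarith [hhr b hb]
      have hrpos : 0 < r := by linarith
      have hhrb : h r ≤ (3/2) * h b := by
        have hl := hlip r b hrpos hb
        linarith
      apply ENNReal.ofReal_le_ofReal
      exact div_le_div₀ (by positivity)
        (pow_le_pow_left₀ (hh0 r hrpos) hhrb n) (by positivity)
        (pow_le_pow_left₀ (by linarith) hb2 _)
    calc ∫⁻ r in Metric.closedBall b (4 * (h b / 8)), g r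
        ≤ ∫⁻ _ in Metric.closedBall b (4 * (h b / 8)),
            ENNReal.ofReal (((3/2) * h b)^n / (b/2)^(n+1)) :=
          setLIntegral_mono' measurableSet_closedBall key
    _ = ENNReal.ofReal (((3/2) * h b)^n / (b/2)^(n+1)) *
          ENNReal.ofReal (2 * (4 * (h b / 8))) := by
          rw [setLIntegral_const, Real.volume_closedBall]
    _ = ENNReal.ofReal (((3/2) * h b)^n / (b/2)^(n+1) * (2 * (4 * (h b / 8)))) :=
          (ENNReal.ofReal_mul (by positivity)).symm
    _ ≤ Cn * ENNReal.ofReal (h b ^ (n+1) / b ^ (n+1)) := by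
        rw [hCndef, ← ENNReal.ofReal_mul (by positivity)]
        apply ENNReal.ofReal_le_ofReal
        have heq : ((3/2) * h b)^n / (b/2)^(n+1) * (2 * (4 * (h b / 8)))
            = (3/2)^n * 2^(n+1) * (h b ^ (n+1) / b ^ (n+1)) := by
          rw [mul_pow, div_pow]
          field_simp
          have h12 : ((1:ℝ)/2)^n * 2^n = 1 := by rw [← mul_pow]; norm_num
          linear_combination (-(h b * h b ^ n * b * b ^ n * 8)) * h12
        rw [heq]
  -- the open set where h is positive
  set U : Set ℝ := Set.Ioo (0:ℝ) r₁ ∩ h ⁻¹' Set.Ioi 0 with hUdef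
  have hUopen : IsOpen U :=
    (hhcont.mono (fun x hx => hx.1)).isOpen_inter_preimage isOpen_Ioo isOpen_Ioi
  -- Vitali covering
  obtain ⟨u, huU, hudisj, hucov⟩ :=
    Vitali.exists_disjoint_subfamily_covering_enlargement_closedBall U (fun a => a)
      (fun a => h a / 8) 1
      (fun a ha => by
        have h1 := hhr a ha.1.1
        have h2 := ha.1.2
        have h3 := hr₁.2
        linarith) 4 (by norm_num)
  have hucount : u.Countable := by
    refine hudisj.countable_of_nonempty_interior (fun b hb => ?_)
    have hbU := huU hb
    have hpos : 0 < h b / 8 := by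
      have := hbU.2
      simp only [Set.mem_preimage, Set.mem_Ioi] at this
      linarith
    rw [interior_closedBall _ hpos.ne']
    exact ⟨b, mem_ball_self hpos⟩
  haveI : Countable ↥u := hucount.to_subtype
  -- choose the balls
  have hKL' : ∀ b : ↥u, ∃ B : Set (EuclideanSpace ℝ (Fin n)), MeasurableSet B ∧
      B ⊆ Metric.closedBall (0 : EuclideanSpace ℝ (Fin n)) 1 ∧
      (∀ z ∈ B, |‖z‖ - (b:ℝ)| ≤ h b / 8) ∧
      κ * ENNReal.ofReal (h b ^ (n+1) / (b:ℝ) ^ (n+1)) ≤ ∫⁻ z in B, F z := by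
    intro b
    have hbU := huU b.2
    have hpos : 0 < h (b:ℝ) := by
      have := hbU.2
      simpa only [Set.mem_preimage, Set.mem_Ioi] using this
    exact hKL b hbU.1.1 hbU.1.2 hpos
  choose B hBmeas hBsub hBann hBlow using hKL'
  have hBdisj : Pairwise (Function.onFun Disjoint B) := by
    intro i j hij
    have hij' : (i:ℝ) ≠ (j:ℝ) := fun hc => hij (Subtype.ext hc)
    have hdisj2 : Disjoint (Metric.closedBall (i:ℝ) (h i / 8))
        (Metric.closedBall (j:ℝ) (h j / 8)) := hudisj i.2 j.2 hij'
    refine Disjoint.mono ?_ ?_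
      (hdisj2.preimage (fun z : EuclideanSpace ℝ (Fin n) => ‖z‖))
    · intro z hz
      simp only [Set.mem_preimage, Metric.mem_closedBall, Real.dist_eq]
      exact hBann i z hz
    · intro z hz
      simp only [Set.mem_preimage, Metric.mem_closedBall, Real.dist_eq]
      exact hBann j z hz
  -- lower bound for the sum
  have hsum_lower : κ * ∑' b : ↥u, ENNReal.ofReal (h b ^ (n+1) / (b:ℝ) ^ (n+1)) ≤ M := by
    rw [← ENNReal.tsum_mul_left]
    calc ∑' b : ↥u, κ * ENNReal.ofReal (h b ^ (n+1) / (b:ℝ) ^ (n+1))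
        ≤ ∑' b : ↥u, ∫⁻ z in B b, F z := ENNReal.tsum_le_tsum hBlow
    _ = ∫⁻ z in ⋃ b : ↥u, B b, F z := (lintegral_iUnion hBmeas hBdisj F).symm
    _ ≤ M := lintegral_mono_set (Set.iUnion_subset hBsub)
  have hκ0 : κ ≠ 0 := by
    rw [hκdef]
    apply mul_ne_zero
    · exact (ENNReal.ofReal_pos.mpr (by positivity)).ne'
    · exact (measure_ball_pos volume _ one_pos).ne'
  have hSfin : (∑' b : ↥u, ENNReal.ofReal (h b ^ (n+1) / (b:ℝ) ^ (n+1))) < ⊤ := by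
    by_contra hcon
    rw [not_lt, top_le_iff] at hcon
    rw [hcon, ENNReal.mul_top hκ0, top_le_iff] at hsum_lower
    exact hMfin.ne hsum_lower
  -- cover of U
  have hcover : U ⊆ ⋃ b : ↥u, Metric.closedBall (b:ℝ) (4 * (h b / 8)) := by
    intro a ha
    obtain ⟨b, hbu, hsub⟩ := hucov a ha
    have hapos : 0 < h a := by
      have := ha.2
      simpa only [Set.mem_preimage, Set.mem_Ioi] using this
    exact Set.mem_iUnion.mpr ⟨⟨b, hbu⟩, hsub (Metric.mem_closedBall_self (by linarith))⟩
  -- the main finiteness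
  have hIoo_int : ∫⁻ r in Set.Ioo (0:ℝ) r₁, g r < ⊤ := by
    have hsplit : ∫⁻ r in Set.Ioo (0:ℝ) r₁, g r
        ≤ (∫⁻ r in U, g r) + ∫⁻ r in Set.Ioo (0:ℝ) r₁ \ U, g r := by
      refine le_trans (lintegral_mono_set (fun r hr => ?_)) (lintegral_union_le _ _ _)
      by_cases hU : r ∈ U
      · exact Or.inl hU
      · exact Or.inr ⟨hr, hU⟩
    have hzero : ∫⁻ r in Set.Ioo (0:ℝ) r₁ \ U, g r = 0 := by
      refine le_antisymm ?_ zero_le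
      have hle : ∀ r ∈ Set.Ioo (0:ℝ) r₁ \ U, g r ≤ 0 := by
        intro r hr
        have hrIoo := hr.1
        have hh0' : h r = 0 := by
          refine le_antisymm ?_ (hh0 r hrIoo.1)
          by_contra hc
          push_neg at hc
          exact hr.2 ⟨hrIoo, hc⟩
        have : g r = 0 := by
          show ENNReal.ofReal (h r ^ n / r ^ (n + 1)) = 0
          rw [hh0', zero_pow (by omega : n ≠ 0), zero_div, ENNReal.ofReal_zero]
        rw [this]
      calc ∫⁻ r in Set.Ioo (0:ℝ) r₁ \ U, g r
          ≤ ∫⁻ _ in Set.Ioo (0:ℝ) r₁ \ U, (0:ENNReal) :=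
            setLIntegral_mono' (measurableSet_Ioo.diff hUopen.measurableSet) hle
      _ = 0 := by simp
    have hUb : ∫⁻ r in U, g r ≤ Cn * ∑' b : ↥u, ENNReal.ofReal (h b ^ (n+1) / (b:ℝ) ^ (n+1)) := by
      calc ∫⁻ r in U, g r
          ≤ ∫⁻ r in ⋃ b : ↥u, Metric.closedBall (b:ℝ) (4 * (h b / 8)), g r :=
            lintegral_mono_set hcover
      _ ≤ ∑' b : ↥u, ∫⁻ r in Metric.closedBall (b:ℝ) (4 * (h b / 8)), g r :=
            lintegral_iUnion_le _ _
      _ ≤ ∑' b : ↥u, Cn * ENNReal.ofReal (h b ^ (n+1) / (b:ℝ) ^ (n+1)) := by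
            refine ENNReal.tsum_le_tsum (fun b => ?_)
            have hbU := huU b.2
            have hpos : 0 < h (b:ℝ) := by
              have := hbU.2
              simpa only [Set.mem_preimage, Set.mem_Ioi] using this
            exact hCL b hbU.1.1 hpos
      _ = Cn * ∑' b : ↥u, ENNReal.ofReal (h b ^ (n+1) / (b:ℝ) ^ (n+1)) :=
            ENNReal.tsum_mul_left
    calc ∫⁻ r in Set.Ioo (0:ℝ) r₁, g r
        ≤ (∫⁻ r in U, g r) + ∫⁻ r in Set.Ioo (0:ℝ) r₁ \ U, g r := hsplit
    _ = ∫⁻ r in U, g r := by rw [hzero, add_zero]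
    _ ≤ Cn * ∑' b : ↥u, ENNReal.ofReal (h b ^ (n+1) / (b:ℝ) ^ (n+1)) := hUb
    _ < ⊤ := ENNReal.mul_lt_top ENNReal.ofReal_lt_top hSfin
  -- conclusion
  constructor
  · refine ContinuousOn.aestronglyMeasurable ?_ measurableSet_Ioo
    exact ((hhcont.mono (fun x hx => hx.1)).pow n).div
      ((continuous_pow (n+1)).continuousOn) (fun r hr => pow_ne_zero _ (ne_of_gt hr.1))
  · rw [HasFiniteIntegral]
    have hcongr : ∫⁻ r in Set.Ioo (0:ℝ) r₁, ‖h r ^ n / r ^ (n+1)‖ₑ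
        = ∫⁻ r in Set.Ioo (0:ℝ) r₁, g r := by
      refine setLIntegral_congr_fun measurableSet_Ioo ?_
      intro r hr
      rw [hgdef]
      dsimp only
      rw [Real.enorm_eq_ofReal]
      exact div_nonneg (pow_nonneg (hh0 r hr.1) n) (pow_nonneg hr.1.le _)
    rw [hcongr]
    exact hIoo_int
end
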